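/- arXiv:2506.22251 — 8 statements merged into one kernel-verified Lean document; each statement's English description precedes it below -/
import Mathlib

section
/- For every ν with 0 < ν < 4/3, G(k₊(ν);ν) = (2/27)(√(4−3ν) + 2)²(√(4−3ν) − 1); consequently G(k₊(ν);ν) > 0 if and only if ν < 1, and G(k₊(1);1) = 0. -/
/-- G(k;ν) = −νk² + 2k⁴ − k⁶. -/
noncomputable def G (k ν : ℝ) : ℝ := -ν * k ^ 2 + 2 * k ^ 4 - k ^ 6

/-- k₊(ν) = √((4+√(16−12ν))/6). -/
noncomputable def kplus (ν : ℝ) : ℝ := Real.sqrt ((4 + Real.sqrt (16 - 12 * ν)) / 6)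

lemma G_main (ν : ℝ) (h0 : 0 < ν) (h1 : ν < 4 / 3) :
    G (kplus ν) ν =
      2 / 27 * (Real.sqrt (4 - 3 * ν) + 2) ^ 2 * (Real.sqrt (4 - 3 * ν) - 1) := by
  set s := Real.sqrt (4 - 3 * ν) with hs
  have hpos : (0:ℝ) ≤ 4 - 3 * ν := by linarith
  have hs2 : s ^ 2 = 4 - 3 * ν := Real.sq_sqrt hpos
  have hsnn : 0 ≤ s := Real.sqrt_nonneg _
  have h16 : Real.sqrt (16 - 12 * ν) = 2 * s := by
    rw [show (16 : ℝ) - 12 * ν = 2 ^ 2 * (4 - 3 * ν) by ring, Real.sqrt_mul (by positivity),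
      Real.sqrt_sq (by norm_num)]
  have hxnn : (0:ℝ) ≤ (4 + 2 * s) / 6 := by positivity
  have hk2 : kplus ν ^ 2 = (4 + 2 * s) / 6 := by
    rw [kplus, h16, Real.sq_sqrt hxnn]
  have hk4 : kplus ν ^ 4 = ((4 + 2 * s) / 6) ^ 2 := by rw [← hk2]; ring
  have hk6 : kplus ν ^ 6 = ((4 + 2 * s) / 6) ^ 3 := by rw [← hk2]; ring
  rw [G, hk2, hk4, hk6]
  nlinarith [hs2, sq_nonneg s]

/-- For 0 < ν < 4/3,
G(k₊(ν);ν) = (2/27)(√(4−3ν) + 2)²(√(4−3ν) − 1), hence G(k₊(ν);ν) > 0 iff ν < 1,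
and G(k₊(1);1) = 0. -/
theorem G_at_kplus :
    (∀ ν : ℝ, 0 < ν → ν < 4 / 3 →
      G (kplus ν) ν =
          2 / 27 * (Real.sqrt (4 - 3 * ν) + 2) ^ 2 * (Real.sqrt (4 - 3 * ν) - 1) ∧
        (0 < G (kplus ν) ν ↔ ν < 1)) ∧
    G (kplus 1) 1 = 0 := by
  constructor
  · intro ν h0 h1
    have hmain := G_main ν h0 h1
    refine ⟨hmain, ?_⟩
    set s := Real.sqrt (4 - 3 * ν) with hs
    have hpos : (0:ℝ) ≤ 4 - 3 * ν := by linarith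
    have hs2 : s ^ 2 = 4 - 3 * ν := Real.sq_sqrt hpos
    have hsnn : 0 ≤ s := Real.sqrt_nonneg _
    rw [hmain]
    constructor
    · intro h
      have hsgt : 1 < s := by nlinarith [sq_nonneg (s + 2)]
      nlinarith
    · intro h
      have hsgt : 1 < s := by nlinarith
      nlinarith
  · have := G_main 1 (by norm_num) (by norm_num)
    rw [this]
    norm_num
end

section
/- Let α, β, d, K, A_p be real with B_p := 1 − K². Then for every λ ∈ ℂ, det(𝒜(0) − λI₃) = −λ(λ² + 2α(1−K²)λ + 2αβA_p²). Moreover, if α > 0 and A_p > 0, then both roots of the quadratic z² + 2α(1−K²)z + 2αβA_p² have strictly negative real part if and only if β > 0 and K² < 1; in particular, if β < 0 or K² > 1, the matrix 𝒜(0) has an eigenvalue with strictly positive real part (ODE instability of the plane wave). -/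
lemma root_real (b c s : ℝ) (hs : s ^ 2 = b ^ 2 - 4 * c) :
    ((((-b + s) / 2 : ℝ) : ℂ)) ^ 2 + (b : ℂ) * (((-b + s) / 2 : ℝ) : ℂ) + (c : ℂ) = 0 := by
  have h : ((-b + s) / 2) ^ 2 + b * ((-b + s) / 2) + c = 0 := by linear_combination hs / 4
  exact_mod_cast h

lemma root_complex (b c t : ℝ) (ht : t ^ 2 = 4 * c - b ^ 2) :
    (((-b / 2 : ℝ) : ℂ) + ((t / 2 : ℝ) : ℂ) * Complex.I) ^ 2 +
      (b : ℂ) * (((-b / 2 : ℝ) : ℂ) + ((t / 2 : ℝ) : ℂ) * Complex.I) + (c : ℂ) = 0 := by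
  have htC : (t : ℂ) ^ 2 = 4 * (c : ℂ) - (b : ℂ) ^ 2 := by exact_mod_cast ht
  push_cast
  linear_combination ((t:ℂ) ^ 2 / 4) * Complex.I_sq - (1 / 4 : ℂ) * htC

lemma exists_root_re_pos (b c : ℝ) (h : c < 0 ∨ b < 0) :
    ∃ z : ℂ, z ^ 2 + (b : ℂ) * z + (c : ℂ) = 0 ∧ 0 < z.re := by
  by_cases hd : 0 ≤ b ^ 2 - 4 * c
  · set s := Real.sqrt (b ^ 2 - 4 * c) with hsdef
    have hs : s ^ 2 = b ^ 2 - 4 * c := Real.sq_sqrt hd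
    refine ⟨(((-b + s) / 2 : ℝ) : ℂ), root_real b c s hs, ?_⟩
    have hre : ((((-b + s) / 2 : ℝ) : ℂ)).re = (-b + s) / 2 := by simp
    rw [hre]
    rcases h with hc | hb
    · have : |b| < s := by
        have : b ^ 2 < s ^ 2 := by rw [hs]; linarith
        nlinarith [abs_nonneg b, Real.sqrt_nonneg (b ^ 2 - 4 * c), sq_abs b]
      have := le_abs_self b
      linarith
    · have : 0 ≤ s := Real.sqrt_nonneg _
      linarith
  · have hc : 0 < c := by nlinarith [sq_nonneg b]
    have hb : b < 0 := by rcases h with h | h <;> linarith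
    set t := Real.sqrt (4 * c - b ^ 2) with htdef
    have ht : t ^ 2 = 4 * c - b ^ 2 := Real.sq_sqrt (by linarith)
    refine ⟨((-b / 2 : ℝ) : ℂ) + ((t / 2 : ℝ) : ℂ) * Complex.I, root_complex b c t ht, ?_⟩
    simp [Complex.add_re, Complex.mul_re]
    linarith

lemma exists_root_re_nonneg (b c : ℝ) (h : c ≤ 0 ∨ b ≤ 0) :
    ∃ z : ℂ, z ^ 2 + (b : ℂ) * z + (c : ℂ) = 0 ∧ 0 ≤ z.re := by
  by_cases hd : 0 ≤ b ^ 2 - 4 * c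
  · set s := Real.sqrt (b ^ 2 - 4 * c) with hsdef
    have hs : s ^ 2 = b ^ 2 - 4 * c := Real.sq_sqrt hd
    refine ⟨(((-b + s) / 2 : ℝ) : ℂ), root_real b c s hs, ?_⟩
    have hre : ((((-b + s) / 2 : ℝ) : ℂ)).re = (-b + s) / 2 := by simp
    rw [hre]
    rcases h with hc | hb
    · have : |b| ≤ s := by
        have : b ^ 2 ≤ s ^ 2 := by rw [hs]; linarith
        nlinarith [abs_nonneg b, Real.sqrt_nonneg (b ^ 2 - 4 * c), sq_abs b]
      have := le_abs_self b
      linarith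
    · have : 0 ≤ s := Real.sqrt_nonneg _
      linarith
  · have hc : 0 < c := by nlinarith [sq_nonneg b]
    have hb : b ≤ 0 := by rcases h with h | h <;> linarith
    set t := Real.sqrt (4 * c - b ^ 2) with htdef
    have ht : t ^ 2 = 4 * c - b ^ 2 := Real.sq_sqrt (by linarith)
    refine ⟨((-b / 2 : ℝ) : ℂ) + ((t / 2 : ℝ) : ℂ) * Complex.I, root_complex b c t ht, ?_⟩
    simp [Complex.add_re, Complex.mul_re]
    linarith

lemma hurwitz (b c : ℝ) :
    (∀ z : ℂ, z ^ 2 + (b : ℂ) * z + (c : ℂ) = 0 → z.re < 0) ↔ (0 < b ∧ 0 < c) := by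
  constructor
  · intro H
    constructor
    · by_contra hb
      push_neg at hb
      obtain ⟨z, hz, hre⟩ := exists_root_re_nonneg b c (Or.inr hb)
      exact absurd (H z hz) (not_lt.mpr hre)
    · by_contra hc
      push_neg at hc
      obtain ⟨z, hz, hre⟩ := exists_root_re_nonneg b c (Or.inl hc)
      exact absurd (H z hz) (not_lt.mpr hre)
  · rintro ⟨hb, hc⟩ z hz
    have h1 : z.re ^ 2 - z.im ^ 2 + b * z.re + c = 0 := by
      have := congrArg Complex.re hz
      simp [pow_two, Complex.add_re, Complex.mul_re] at this
      linarith [this]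
    have h2 : 2 * z.re * z.im + b * z.im = 0 := by
      have := congrArg Complex.im hz
      simp [pow_two, Complex.add_im, Complex.mul_im] at this
      linarith [this]
    by_contra hx
    push_neg at hx
    have h4 : b * (z.re ^ 2 - z.im ^ 2 + b * z.re + c) +
        z.im * (2 * z.re * z.im + b * z.im) = 0 := by rw [h1, h2]; ring
    nlinarith [mul_pos hb hc, mul_nonneg hx (sq_nonneg z.im),
      mul_nonneg hb.le (sq_nonneg z.re), mul_nonneg (mul_nonneg hb.le hb.le) hx]


/-- with B_p = 1 − K², for all λ ∈ ℂ,
det(𝒜(0) − λI₃) = −λ(λ² + 2α(1−K²)λ + 2αβA_p²). Moreover if α > 0 and A_p > 0,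
both roots of z² + 2α(1−K²)z + 2αβA_p² have negative real part iff β > 0 and
K² < 1; in particular if β < 0 or K² > 1 then 𝒜(0) has an eigenvalue with
strictly positive real part. -/
theorem ODE_stability_plane_wave (α β d K Ap Bp : ℝ) (hBp : Bp = 1 - K ^ 2)
    (A0 : Matrix (Fin 3) (Fin 3) ℂ)
    (hA0 : A0 = Matrix.of
      ![![0, 0, -(Ap : ℂ)],
        ![0, 0, 0],
        ![2 * (α : ℂ) * (β : ℂ) * (Ap : ℂ), 0, -2 * (α : ℂ) * (Bp : ℂ)]]) :
    (∀ lam : ℂ, Matrix.det (A0 - lam • (1 : Matrix (Fin 3) (Fin 3) ℂ)) =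
        -lam * (lam ^ 2 + 2 * (α : ℂ) * (1 - (K : ℂ) ^ 2) * lam +
          2 * (α : ℂ) * (β : ℂ) * (Ap : ℂ) ^ 2)) ∧
    (0 < α → 0 < Ap →
      (((∀ z : ℂ, z ^ 2 + 2 * (α : ℂ) * (1 - (K : ℂ) ^ 2) * z +
            2 * (α : ℂ) * (β : ℂ) * (Ap : ℂ) ^ 2 = 0 → z.re < 0) ↔
          (0 < β ∧ K ^ 2 < 1)) ∧
        ((β < 0 ∨ 1 < K ^ 2) →
          ∃ lam : ℂ,
            Matrix.det (A0 - lam • (1 : Matrix (Fin 3) (Fin 3) ℂ)) = 0 ∧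
            0 < lam.re))) := by
  have hBpC : (Bp : ℂ) = 1 - (K : ℂ) ^ 2 := by rw [hBp]; push_cast; ring
  have hdet : ∀ lam : ℂ, Matrix.det (A0 - lam • (1 : Matrix (Fin 3) (Fin 3) ℂ)) =
      -lam * (lam ^ 2 + 2 * (α : ℂ) * (1 - (K : ℂ) ^ 2) * lam +
        2 * (α : ℂ) * (β : ℂ) * (Ap : ℂ) ^ 2) := by
    intro lam
    rw [hA0]
    rw [Matrix.det_fin_three]
    simp [Matrix.sub_apply, Matrix.smul_apply, Matrix.one_apply, hBpC]
    ring
  refine ⟨hdet, fun hα hAp => ?_⟩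
  set b : ℝ := 2 * α * (1 - K ^ 2) with hbdef
  set c : ℝ := 2 * α * β * Ap ^ 2 with hcdef
  have hcast : ∀ z : ℂ, z ^ 2 + 2 * (α : ℂ) * (1 - (K : ℂ) ^ 2) * z +
      2 * (α : ℂ) * (β : ℂ) * (Ap : ℂ) ^ 2 = z ^ 2 + (b : ℂ) * z + (c : ℂ) := by
    intro z; push_cast [hbdef, hcdef]; ring
  constructor
  · rw [show (∀ z : ℂ, z ^ 2 + 2 * (α : ℂ) * (1 - (K : ℂ) ^ 2) * z +
      2 * (α : ℂ) * (β : ℂ) * (Ap : ℂ) ^ 2 = 0 → z.re < 0) ↔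
      (∀ z : ℂ, z ^ 2 + (b : ℂ) * z + (c : ℂ) = 0 → z.re < 0) from by
        constructor <;> intro h z hz <;> apply h z <;> rw [hcast] at * <;> exact hz]
    rw [hurwitz b c]
    constructor
    · rintro ⟨hb, hc⟩
      have hb' : 0 < 2 * α * (1 - K ^ 2) := hb
      have hc' : 0 < 2 * α * β * Ap ^ 2 := hc
      constructor
      · nlinarith [mul_pos (mul_pos hα hAp) hAp]
      · nlinarith
    · rintro ⟨hβ, hK⟩
      refine ⟨?_, ?_⟩
      · show (0:ℝ) < 2 * α * (1 - K ^ 2); nlinarith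
      · show (0:ℝ) < 2 * α * β * Ap ^ 2; positivity
  · intro h
    have hbc : c < 0 ∨ b < 0 := by
      rcases h with h | h
      · left; show 2 * α * β * Ap ^ 2 < 0
        nlinarith [mul_neg_of_neg_of_pos h (mul_pos (mul_pos hα hAp) hAp)]
      · right; show 2 * α * (1 - K ^ 2) < 0; nlinarith
    obtain ⟨z, hz, hre⟩ := exists_root_re_pos b c hbc
    refine ⟨z, ?_, hre⟩
    rw [hdet z, hcast z, hz, mul_zero]
end

section
/- Let α, d > 0, β > 0, K² < 1 and R > 1 − (1−K²)², and set P := (1−K²)² + R − 1 > 0. Define the real polynomial q(m,λ) := −2αP(m+λ) + (−2α(1−K²) − dαm − λ)((m+λ)² − 4mK²). Then q(0,0) = 0, ∂q/∂λ(0,0) = −2αP ≠ 0, and there exist ε > 0 and a differentiable function λ₁ : (−ε, ε) → ℝ with λ₁(0) = 0, q(m, λ₁(m)) = 0 for all |m| < ε, and λ₁'(0) = (6K² − 5K⁴ − R)/P. In particular the critical (sideband) eigenvalue branch satisfies λ₁'(0) < 0 if and only if R > R_s(K) := 6K² − 5K⁴. -/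
open ContinuousLinearMap in
/-- The invertible linear map `(x, y) ↦ (x, a x + b y)` for `b ≠ 0`. -/
noncomputable def sbEquiv (a b : ℝ) (hb : b ≠ 0) : (ℝ × ℝ) ≃L[ℝ] (ℝ × ℝ) :=
  ContinuousLinearEquiv.equivOfInverse
    ((fst ℝ ℝ ℝ).prod (a • fst ℝ ℝ ℝ + b • snd ℝ ℝ ℝ))
    ((fst ℝ ℝ ℝ).prod (b⁻¹ • (snd ℝ ℝ ℝ - a • fst ℝ ℝ ℝ)))
    (fun p => by
      simp [Prod.ext_iff]
      field_simp)
    (fun p => by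
      simp [Prod.ext_iff]
      field_simp
      ring)

/-- Implicit function theorem for a scalar equation `g (m, λ) = 0` near the origin. -/
theorem sb_branch (a b : ℝ) (hb : b ≠ 0) (g : ℝ × ℝ → ℝ)
    (hg : HasStrictFDerivAt g
      (a • ContinuousLinearMap.fst ℝ ℝ ℝ + b • ContinuousLinearMap.snd ℝ ℝ ℝ) (0, 0))
    (hsm : ContDiffAt ℝ 1 g (0, 0)) (hg0 : g (0, 0) = 0) :
    ∃ ε > 0, ∃ lam1 : ℝ → ℝ, lam1 0 = 0 ∧
      (∀ m : ℝ, |m| < ε → DifferentiableAt ℝ lam1 m ∧ g (m, lam1 m) = 0) ∧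
      deriv lam1 0 = -(a / b) := by
  set F : ℝ × ℝ → ℝ × ℝ := fun p => (p.1, g p) with hFdef
  have hF0 : F (0, 0) = (0, 0) := by
    show ((0 : ℝ), g (0, 0)) = ((0 : ℝ), (0 : ℝ))
    rw [hg0]
  set e := sbEquiv a b hb with hedef
  have hFs : HasStrictFDerivAt F ((e : (ℝ × ℝ) →L[ℝ] ℝ × ℝ)) (0, 0) :=
    HasStrictFDerivAt.prodMk hasStrictFDerivAt_fst hg
  have hFc : ContDiffAt ℝ 1 F (0, 0) := ContDiffAt.prodMk contDiffAt_fst hsm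
  set G : ℝ × ℝ → ℝ × ℝ := hFs.localInverse F e (0, 0) with hGdef
  have hGs : HasStrictFDerivAt G ((e.symm : (ℝ × ℝ) →L[ℝ] ℝ × ℝ)) (0, 0) := by
    have h := hFs.to_localInverse
    rwa [hF0] at h
  have hGc : ContDiffAt ℝ 1 G (0, 0) := by
    have h := hFc.to_localInverse (f' := e) hFs.hasFDerivAt one_ne_zero
    rwa [hF0] at h
  have hG0 : G (0, 0) = (0, 0) := by
    have h := hFs.localInverse_apply_image
    rwa [hF0] at h
  have hev : ∀ᶠ y in nhds ((0 : ℝ), (0 : ℝ)), ContDiffAt ℝ 1 G y ∧ F (G y) = y := by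
    have h1 := hGc.eventually (by norm_num)
    have h2 := hFs.eventually_right_inverse
    rw [hF0] at h2
    exact h1.and h2
  rw [Metric.eventually_nhds_iff] at hev
  obtain ⟨ε, hε, hball⟩ := hev
  refine ⟨ε, hε, fun m => (G (m, 0)).2, ?_, ?_, ?_⟩
  · show (G (0, 0)).2 = 0
    rw [hG0]
  · intro m hm
    have hmem : dist ((m, (0 : ℝ)) : ℝ × ℝ) ((0 : ℝ), (0 : ℝ)) < ε := by
      rw [Prod.dist_eq]
      simpa [Real.dist_eq] using hm
    obtain ⟨hc, hfg⟩ := hball hmem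
    constructor
    · have h1 : DifferentiableAt ℝ (fun m : ℝ => ((m, (0 : ℝ)) : ℝ × ℝ)) m :=
        differentiableAt_id.prodMk (differentiableAt_const 0)
      exact ((hc.differentiableAt one_ne_zero).comp m h1).snd
    · have e1 : (G (m, 0)).1 = m := congrArg Prod.fst hfg
      have e2 : g (G (m, 0)) = 0 := congrArg Prod.snd hfg
      have h3 : ((m, (G (m, 0)).2) : ℝ × ℝ) = G (m, 0) := by
        rw [Prod.ext_iff]; exact ⟨e1.symm, rfl⟩
      rw [h3]; exact e2
  · have hline : HasDerivAt (fun m : ℝ => ((m, (0 : ℝ)) : ℝ × ℝ)) (1, 0) 0 :=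
      HasDerivAt.prodMk (hasDerivAt_id (0:ℝ)) (hasDerivAt_const (0:ℝ) (0:ℝ))
    have hcomp : HasDerivAt (fun m : ℝ => G (m, 0))
        ((e.symm : (ℝ × ℝ) →L[ℝ] ℝ × ℝ) (1, 0)) 0 :=
      hGs.hasFDerivAt.comp_hasDerivAt_of_eq 0 hline rfl
    have hlam : HasDerivAt (fun m : ℝ => (G (m, 0)).2)
        (((e.symm : (ℝ × ℝ) →L[ℝ] ℝ × ℝ) (1, 0)).2) 0 :=
      (ContinuousLinearMap.snd ℝ ℝ ℝ).hasFDerivAt.comp_hasDerivAt 0 hcomp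
    rw [hlam.deriv, hedef, sbEquiv, ContinuousLinearEquiv.symm_equivOfInverse]
    simp
    field_simp

/-- sideband stability. With P = (1−K²)² + R − 1 > 0 and
q(m,λ) = −2αP(m+λ) + (−2α(1−K²) − dαm − λ)((m+λ)² − 4mK²), one has q(0,0) = 0,
∂q/∂λ(0,0) = −2αP ≠ 0, and there is a differentiable branch λ₁ with λ₁(0) = 0,
q(m,λ₁(m)) = 0 for |m| < ε and λ₁'(0) = (6K² − 5K⁴ − R)/P; in particular
λ₁'(0) < 0 iff R > 6K² − 5K⁴. -/
theorem sideband_eigenvalue_branch (α d β K R : ℝ)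
    (hα : 0 < α) (hd : 0 < d) (hβ : 0 < β)
    (hK : K ^ 2 < 1) (hR : 1 - (1 - K ^ 2) ^ 2 < R)
    (P : ℝ) (hP : P = (1 - K ^ 2) ^ 2 + R - 1)
    (q : ℝ → ℝ → ℝ)
    (hq : ∀ m lam : ℝ, q m lam =
      -2 * α * P * (m + lam) +
        (-2 * α * (1 - K ^ 2) - d * α * m - lam) * ((m + lam) ^ 2 - 4 * m * K ^ 2)) :
    0 < P ∧
    q 0 0 = 0 ∧
    deriv (fun lam => q 0 lam) 0 = -2 * α * P ∧
    -2 * α * P ≠ 0 ∧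
    ∃ ε > 0, ∃ lam1 : ℝ → ℝ,
      lam1 0 = 0 ∧
      (∀ m : ℝ, |m| < ε → DifferentiableAt ℝ lam1 m ∧ q m (lam1 m) = 0) ∧
      deriv lam1 0 = (6 * K ^ 2 - 5 * K ^ 4 - R) / P ∧
      (deriv lam1 0 < 0 ↔ 6 * K ^ 2 - 5 * K ^ 4 < R) := by
  have hPpos : 0 < P := by rw [hP]; linarith
  have hbneg : -2 * α * P < 0 := by nlinarith
  have hb : -2 * α * P ≠ 0 := hbneg.ne
  refine ⟨hPpos, by rw [hq]; ring, ?_, hb, ?_⟩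
  · -- deriv (fun lam => q 0 lam) 0 = -2αP
    have hf0 : (fun lam => q 0 lam) =
        fun lam : ℝ => -2 * α * P * lam + (-2 * α * (1 - K ^ 2) - lam) * (lam * lam) := by
      funext lam; rw [hq]; ring
    have h := ((hasDerivAt_id (0 : ℝ)).const_mul (-2 * α * P)).add
      (((hasDerivAt_const (0 : ℝ) (-2 * α * (1 - K ^ 2))).sub (hasDerivAt_id 0)).mul
        ((hasDerivAt_id (0 : ℝ)).mul (hasDerivAt_id 0)))
    rw [hf0]
    have h' : HasDerivAt
        (fun lam : ℝ => -2 * α * P * lam + (-2 * α * (1 - K ^ 2) - lam) * (lam * lam))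
        (-2 * α * P) 0 := by
      refine h.congr_deriv ?_; simp
    exact h'.deriv
  · -- existence of the branch
    set a : ℝ := -2 * α * P + 8 * α * (1 - K ^ 2) * K ^ 2 with hadef
    have hfun : (fun p : ℝ × ℝ => q p.1 p.2) =
        fun p : ℝ × ℝ => -2 * α * P * (p.1 + p.2) +
          (-2 * α * (1 - K ^ 2) - d * α * p.1 - p.2) *
            ((p.1 + p.2) * (p.1 + p.2) - 4 * K ^ 2 * p.1) := by
      funext p; rw [hq]; ring
    have h1 : HasStrictFDerivAt (fun p : ℝ × ℝ => p.1)
        (ContinuousLinearMap.fst ℝ ℝ ℝ) ((0 : ℝ), (0 : ℝ)) := hasStrictFDerivAt_fst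
    have h2 : HasStrictFDerivAt (fun p : ℝ × ℝ => p.2)
        (ContinuousLinearMap.snd ℝ ℝ ℝ) ((0 : ℝ), (0 : ℝ)) := hasStrictFDerivAt_snd
    have hs := h1.add h2
    have hA := ((hasStrictFDerivAt_const (-2 * α * (1 - K ^ 2)) ((0 : ℝ), (0 : ℝ))).sub
      (h1.const_mul (d * α))).sub h2
    have hB := (hs.mul hs).sub (h1.const_mul (4 * K ^ 2))
    have hbig := (hs.const_mul (-2 * α * P)).add (hA.mul hB)
    have hg : HasStrictFDerivAt (fun p : ℝ × ℝ => q p.1 p.2)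
        (a • ContinuousLinearMap.fst ℝ ℝ ℝ +
          (-2 * α * P) • ContinuousLinearMap.snd ℝ ℝ ℝ) ((0 : ℝ), (0 : ℝ)) := by
      rw [hfun]
      refine hbig.congr_fderiv ?_
      apply ContinuousLinearMap.ext
      rintro ⟨x, y⟩
      simp [hadef]
      ring
    have hsm : ContDiffAt ℝ 1 (fun p : ℝ × ℝ => q p.1 p.2) ((0 : ℝ), (0 : ℝ)) := by
      rw [hfun]; fun_prop
    have hg0 : (fun p : ℝ × ℝ => q p.1 p.2) ((0 : ℝ), (0 : ℝ)) = 0 := by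
      simp only; rw [hq]; ring
    obtain ⟨ε, hε, lam1, hl0, hmain, hderiv⟩ :=
      sb_branch a (-2 * α * P) hb (fun p : ℝ × ℝ => q p.1 p.2) hg hsm hg0
    have hval : -(a / (-2 * α * P)) = (6 * K ^ 2 - 5 * K ^ 4 - R) / P := by
      rw [hadef, ← neg_div, div_eq_div_iff hb hPpos.ne', hP]
      ring
    rw [hval] at hderiv
    refine ⟨ε, hε, lam1, hl0, fun m hm => hmain m hm, hderiv, ?_⟩
    rw [hderiv, div_lt_iff₀ hPpos, zero_mul]
    constructor <;> intro h <;> linarith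
end

section
/- Let α ≠ 0, d ≠ 0, and K, P ∈ ℝ, with B_p := 1 − K², and define q(m,λ) := −2αP(m+λ) + (−2αB_p − dαm − λ)((m+λ)² − 4mK²). Then the identity 2q(m,0) − 2m·∂q/∂m(m,0) = 4αm²(B_p + d(m − 2K²)) holds for all m; consequently, if m_c ≠ 0 satisfies q(m_c,0) = 0 and ∂q/∂m(m_c,0) = 0, then m_c = 2K² − B_p/d = ((2d+1)K² − 1)/d. (Thus a Turing instability of the plane wave can occur only at squared wavenumber k_c² = ((2d+1)K² − 1)/d, and only if K² > 1/(2d+1).) -/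
/-- with B_p = 1 − K² and
q(m,λ) = −2αP(m+λ) + (−2αB_p − dαm − λ)((m+λ)² − 4mK²), the identity
2q(m,0) − 2m·∂q/∂m(m,0) = 4αm²(B_p + d(m − 2K²)) holds; hence a nonzero
double root m_c of q(·,0) must equal ((2d+1)K² − 1)/d. -/
theorem turing_instability_wavenumber (α d K P : ℝ)
    (hα : α ≠ 0) (hd : d ≠ 0)
    (Bp : ℝ) (hBp : Bp = 1 - K ^ 2)
    (q : ℝ → ℝ → ℝ)
    (hq : ∀ m lam : ℝ, q m lam =
      -2 * α * P * (m + lam) +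
        (-2 * α * Bp - d * α * m - lam) * ((m + lam) ^ 2 - 4 * m * K ^ 2)) :
    (∀ m : ℝ,
      2 * q m 0 - 2 * m * deriv (fun x => q x 0) m =
        4 * α * m ^ 2 * (Bp + d * (m - 2 * K ^ 2))) ∧
    (∀ mc : ℝ, mc ≠ 0 → q mc 0 = 0 → deriv (fun x => q x 0) mc = 0 →
      mc = ((2 * d + 1) * K ^ 2 - 1) / d) := by
  have hf : (fun x => q x 0) = fun x : ℝ =>
      -2 * α * P * x + (-2 * α * Bp - d * α * x) * (x ^ 2 - 4 * x * K ^ 2) := by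
    funext x; rw [hq]; ring
  have hderiv : ∀ m : ℝ, deriv (fun x => q x 0) m =
      -2 * α * P + (-(d * α)) * (m ^ 2 - 4 * m * K ^ 2) +
        (-2 * α * Bp - d * α * m) * (2 * m - 4 * K ^ 2) := by
    intro m
    rw [hf]
    have h1 : HasDerivAt (fun x : ℝ => -2 * α * P * x) (-2 * α * P) m := by
      simpa using (hasDerivAt_id m).const_mul (-2 * α * P)
    have h2 : HasDerivAt (fun x : ℝ => -2 * α * Bp - d * α * x) (-(d * α)) m := by
      simpa using ((hasDerivAt_id m).const_mul (d * α)).const_sub (-2 * α * Bp)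
    have h3 : HasDerivAt (fun x : ℝ => x ^ 2 - 4 * x * K ^ 2) (2 * m - 4 * K ^ 2) m := by
      have := (hasDerivAt_pow 2 m).sub (((hasDerivAt_id m).const_mul 4).mul_const (K ^ 2))
      exact this.congr_deriv (by ring)
    exact (h1.add (h2.mul h3)).deriv.trans (by ring)
  have key : ∀ m : ℝ,
      2 * q m 0 - 2 * m * deriv (fun x => q x 0) m =
        4 * α * m ^ 2 * (Bp + d * (m - 2 * K ^ 2)) := by
    intro m
    rw [hderiv, hq]; ring
  refine ⟨key, fun mc hmc hq0 hd0 => ?_⟩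
  have h := key mc
  rw [hq0, hd0] at h
  have h2 : Bp + d * (mc - 2 * K ^ 2) = 0 := by
    have hm2 : (4 * α * mc ^ 2 : ℝ) ≠ 0 :=
      mul_ne_zero (mul_ne_zero (by norm_num) hα) (pow_ne_zero 2 hmc)
    have h3' : 4 * α * mc ^ 2 * (Bp + d * (mc - 2 * K ^ 2)) = 0 := by linarith
    rcases mul_eq_zero.mp h3' with h | h
    · exact absurd h hm2
    · exact h
  field_simp
  nlinarith [h2, hBp]
end

section
/- Let α ∈ ℝ, d ≠ 0, K, R ∈ ℝ, set B_p := 1 − K², P := (1−K²)² + R − 1, m_c := ((2d+1)K² − 1)/d, and q(m,λ) := −2αP(m+λ) + (−2αB_p − dαm − λ)((m+λ)² − 4mK²). Then q(m_c, 0) = −2αm_c(R − R_t(K)), where R_t(K) := 1 + (1 + (2d−1)K²)²/(2d) − (1−K²)². In particular (for α > 0, m_c > 0) q(m_c,0) vanishes exactly at R = R_t(K), is positive for R < R_t(K) and negative for R > R_t(K). -/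
/-- with B_p = 1 − K², P = (1−K²)² + R − 1,
m_c = ((2d+1)K² − 1)/d and R_t(K) = 1 + (1 + (2d−1)K²)²/(2d) − (1−K²)², one has
q(m_c,0) = −2αm_c(R − R_t(K)); in particular (for α > 0, m_c > 0) q(m_c,0)
vanishes exactly at R = R_t(K), is positive for R < R_t(K) and negative for
R > R_t(K). -/
theorem turing_instability_curve (α d K R : ℝ) (hd : d ≠ 0)
    (Bp P mc Rt : ℝ)
    (hBp : Bp = 1 - K ^ 2)
    (hP : P = (1 - K ^ 2) ^ 2 + R - 1)
    (hmc : mc = ((2 * d + 1) * K ^ 2 - 1) / d)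
    (hRt : Rt = 1 + (1 + (2 * d - 1) * K ^ 2) ^ 2 / (2 * d) - (1 - K ^ 2) ^ 2)
    (q : ℝ → ℝ → ℝ)
    (hq : ∀ m lam : ℝ, q m lam =
      -2 * α * P * (m + lam) +
        (-2 * α * Bp - d * α * m - lam) * ((m + lam) ^ 2 - 4 * m * K ^ 2)) :
    q mc 0 = -2 * α * mc * (R - Rt) ∧
    (0 < α → 0 < mc →
      (q mc 0 = 0 ↔ R = Rt) ∧ (R < Rt → 0 < q mc 0) ∧ (Rt < R → q mc 0 < 0)) := by
  have key : q mc 0 = -2 * α * mc * (R - Rt) := by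
    rw [hq, hBp, hP, hmc, hRt]
    field_simp
    ring
  refine ⟨key, fun hα hmc0 => ?_⟩
  rw [key]
  constructor
  · constructor
    · intro h
      have : R - Rt = 0 := by
        have h2 : (-2 * α * mc) ≠ 0 := by nlinarith
        exact (mul_eq_zero.mp h).resolve_left h2
      linarith
    · intro h; rw [h]; ring
  · constructor
    · intro h; nlinarith [mul_pos hα hmc0, mul_pos (mul_pos hα hmc0) (sub_pos.mpr h)]
    · intro h; nlinarith [mul_pos hα hmc0, mul_pos (mul_pos hα hmc0) (sub_pos.mpr h)]
end

section
/- Let d > 0 and define R_s(K) := 6K² − 5K⁴ and R_t(K) := 1 + (1+(2d−1)K²)²/(2d) − (1−K²)². Then for every real K, R_t(K) − R_s(K) = (1 − (2d+1)K²)²/(2d). Consequently R_t(K) ≥ R_s(K) for all K, with equality if and only if K² = 1/(2d+1), and at K² = 1/(2d+1) the common value is R_t(K) = R_s(K) = (12d+1)/(2d+1)²; i.e., the sideband-instability curve and the Turing-instability curve of the plane waves are tangent at (K, R) = (±1/√(2d+1), (12d+1)/(2d+1)²). -/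
/-- with R_s(K) = 6K² − 5K⁴ and
R_t(K) = 1 + (1+(2d−1)K²)²/(2d) − (1−K²)², one has
R_t(K) − R_s(K) = (1 − (2d+1)K²)²/(2d) ≥ 0, with equality iff K² = 1/(2d+1),
and there the common value is (12d+1)/(2d+1)². -/
theorem sideband_turing_tangency (d : ℝ) (hd : 0 < d)
    (Rs Rt : ℝ → ℝ)
    (hRs : ∀ K : ℝ, Rs K = 6 * K ^ 2 - 5 * K ^ 4)
    (hRt : ∀ K : ℝ,
      Rt K = 1 + (1 + (2 * d - 1) * K ^ 2) ^ 2 / (2 * d) - (1 - K ^ 2) ^ 2) :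
    ∀ K : ℝ,
      Rt K - Rs K = (1 - (2 * d + 1) * K ^ 2) ^ 2 / (2 * d) ∧
      Rs K ≤ Rt K ∧
      (Rt K = Rs K ↔ K ^ 2 = 1 / (2 * d + 1)) ∧
      (K ^ 2 = 1 / (2 * d + 1) →
        Rt K = (12 * d + 1) / (2 * d + 1) ^ 2 ∧
        Rs K = (12 * d + 1) / (2 * d + 1) ^ 2) := by
  intro K
  have hd' : (2 : ℝ) * d ≠ 0 := by positivity
  have hD : (2 : ℝ) * d + 1 ≠ 0 := by positivity
  have key : Rt K - Rs K = (1 - (2 * d + 1) * K ^ 2) ^ 2 / (2 * d) := by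
    rw [hRs, hRt]; field_simp; ring
  refine ⟨key, ?_, ?_, ?_⟩
  · have : 0 ≤ (1 - (2 * d + 1) * K ^ 2) ^ 2 / (2 * d) :=
      div_nonneg (sq_nonneg _) (by positivity)
    linarith
  · constructor
    · intro h
      have h0 : (1 - (2 * d + 1) * K ^ 2) ^ 2 / (2 * d) = 0 := by linarith [key]
      have h2 : 1 - (2 * d + 1) * K ^ 2 = 0 := by
        field_simp at h0; simpa using h0
      field_simp
      linarith
    · intro h
      have : (1 - (2 * d + 1) * K ^ 2) = 0 := by
        rw [h]; field_simp; norm_num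
      have : Rt K - Rs K = 0 := by rw [key, this]; simp
      linarith
  · intro h
    have h4 : K ^ 4 = 1 / (2 * d + 1) ^ 2 := by
      rw [show K ^ 4 = (K ^ 2) ^ 2 by ring, h]; field_simp
    constructor
    · rw [hRt, h]; field_simp; ring
    · rw [hRs, h4, h]; field_simp; ring
end

section
/- (Eigenvalue perturbation formula of Lancaster.) Let n ≥ 1, let C : ℝ → ℝ^{n×n} be a matrix-valued function whose entries are differentiable at t₀, let λ : ℝ → ℝ and v : ℝ → ℝⁿ be differentiable at t₀ and satisfy C(t)v(t) = λ(t)v(t) for all t in a neighborhood of t₀, and let p ∈ ℝⁿ be a left eigenvector of C(t₀) for the eigenvalue λ(t₀) (i.e., pᵀC(t₀) = λ(t₀)pᵀ) with ⟨v(t₀), p⟩ ≠ 0. Then λ'(t₀) = ⟨C'(t₀)v(t₀), p⟩ / ⟨v(t₀), p⟩, where C'(t₀) denotes the entrywise derivative of C at t₀ and ⟨·,·⟩ the standard inner product on ℝⁿ. -/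
open Filter Topology Matrix

/-- Lancaster's eigenvalue perturbation formula: if C(t)v(t) = λ(t)v(t)
near t₀, λ and v are differentiable at t₀, the entries of C are differentiable at t₀
with derivative matrix C', p is a left eigenvector of C(t₀) for λ(t₀) and
⟨v(t₀),p⟩ ≠ 0, then λ'(t₀) = ⟨C'v(t₀),p⟩ / ⟨v(t₀),p⟩. -/
theorem lancaster_eigenvalue_derivative (n : ℕ) (hn : 1 ≤ n)
    (C : ℝ → Matrix (Fin n) (Fin n) ℝ) (C' : Matrix (Fin n) (Fin n) ℝ) (t₀ : ℝ)
    (hC : ∀ i j : Fin n, HasDerivAt (fun t => C t i j) (C' i j) t₀)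
    (lam : ℝ → ℝ) (v : ℝ → Fin n → ℝ)
    (hlam : DifferentiableAt ℝ lam t₀)
    (hv : DifferentiableAt ℝ v t₀)
    (heig : ∀ᶠ t in 𝓝 t₀, (C t).mulVec (v t) = lam t • v t)
    (p : Fin n → ℝ)
    (hp : Matrix.vecMul p (C t₀) = lam t₀ • p)
    (hvp : dotProduct (v t₀) p ≠ 0) :
    deriv lam t₀ =
      dotProduct (C'.mulVec (v t₀)) p / dotProduct (v t₀) p := by
  set v' : Fin n → ℝ := deriv v t₀ with hv'
  have hvd : ∀ j, HasDerivAt (fun t => v t j) (v' j) t₀ :=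
    hasDerivAt_pi.mp hv.hasDerivAt
  -- derivative of ⟨v(t), p⟩
  have hdvp : HasDerivAt (fun t => dotProduct (v t) p)
      (dotProduct v' p) t₀ := by
    simp only [dotProduct]
    exact HasDerivAt.fun_sum fun j _ => (hvd j).mul_const (p j)
  -- derivative of ⟨C(t)v(t), p⟩
  have hf : HasDerivAt (fun t => dotProduct ((C t).mulVec (v t)) p)
      (∑ i, (∑ j, (C' i j * v t₀ j + C t₀ i j * v' j)) * p i) t₀ := by
    simp only [dotProduct, Matrix.mulVec]
    exact HasDerivAt.fun_sum fun i _ =>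
      (HasDerivAt.fun_sum fun j _ => (hC i j).mul (hvd j)).mul_const (p i)
  -- derivative of λ(t)⟨v(t), p⟩
  have hg : HasDerivAt (fun t => lam t * dotProduct (v t) p)
      (deriv lam t₀ * dotProduct (v t₀) p + lam t₀ * dotProduct v' p) t₀ :=
    hlam.hasDerivAt.mul hdvp
  -- the two functions agree near t₀
  have heq : (fun t => dotProduct ((C t).mulVec (v t)) p) =ᶠ[𝓝 t₀]
      (fun t => lam t * dotProduct (v t) p) := by
    filter_upwards [heig] with t ht
    rw [ht, smul_dotProduct]
    rfl
  have hf' := hf.congr_of_eventuallyEq heq.symm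
  have hkey := hf'.unique hg
  -- rewrite the sum as ⟨C'v, p⟩ + ⟨C v', p⟩
  have hsum : (∑ i, (∑ j, (C' i j * v t₀ j + C t₀ i j * v' j)) * p i)
      = dotProduct (C'.mulVec (v t₀)) p
        + dotProduct ((C t₀).mulVec v') p := by
    simp only [dotProduct, Matrix.mulVec, ← Finset.sum_add_distrib, ← add_mul,
      Finset.sum_add_distrib]
    simp [add_mul, Finset.sum_add_distrib]
  -- ⟨C(t₀)v', p⟩ = λ(t₀)⟨v', p⟩ using the left eigenvector
  have hleft : dotProduct ((C t₀).mulVec v') p = lam t₀ * dotProduct v' p := by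
    rw [dotProduct_comm, Matrix.dotProduct_mulVec, hp, smul_dotProduct,
      dotProduct_comm]
    rfl
  rw [hsum, hleft] at hkey
  have : deriv lam t₀ * dotProduct (v t₀) p
      = dotProduct (C'.mulVec (v t₀)) p := by linarith
  field_simp [this]
  exact this
end

section
/- (Leading-order asymptotics of the Turing point near a fold.) Let F : ℝ × ℝ → ℝ be twice continuously differentiable on a neighborhood of (u*, μ*) and suppose F(u*, μ*) = 0, ∂F/∂u(u*, μ*) = 0, a := ∂²F/∂u²(u*, μ*) ≠ 0 and b := ∂F/∂μ(u*, μ*) ≠ 0. Let ε₀ > 0 and let u, μ : (0, ε₀) → ℝ satisfy u(δ) → u* and μ(δ) → μ* as δ → 0⁺, F(u(δ), μ(δ)) = 0 for all δ ∈ (0, ε₀), and ∂F/∂u(u(δ), μ(δ))/δ → c as δ → 0⁺ for some c ∈ ℝ. Then (u(δ) − u*)/δ → c/a and (μ(δ) − μ*)/δ² → −c²/(2ab) as δ → 0⁺. (Applied with c = G_ν*, this yields the expansions uᵗ = u* + (G_ν*/F_uu*)δ + o(δ) and μᵗ = μ* − ((G_ν*)²/(2F_uu*F_μ*))δ² + o(δ²)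 for the Turing point (uᵗ(δ), μᵗ(δ)) approaching the fold point (u*, μ*) as the distance δ to the co-dimension 2 Turing-fold point tends to 0.) -/
open Filter Topology

section AuxiliaryLemmas

open Asymptotics

lemma quad_taylor {E G : Type*} [NormedAddCommGroup E] [NormedSpace ℝ E]
    [NormedAddCommGroup G] [NormedSpace ℝ G]
    {F : E → G} {f' : E → E →L[ℝ] G} {B : E →L[ℝ] E →L[ℝ] G} {x₀ : E}
    (hd : ∀ᶠ y in 𝓝 x₀, HasFDerivAt F (f' y) y) (hB : HasFDerivAt f' B x₀) :
    (fun h => F (x₀ + h) - F x₀ - f' x₀ h - (2⁻¹ : ℝ) • B h h) =o[𝓝 (0:E)] fun h => ‖h‖ ^ 2 := by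
  have hsymm : ∀ v w, B v w = B w v := second_derivative_symmetric_of_eventually hd hB
  rw [Asymptotics.isLittleO_iff]
  intro ε hε
  have h1 : ∀ᶠ h in 𝓝 (0:E), ‖f' (x₀ + h) - f' x₀ - B h‖ ≤ ε * ‖h‖ := by
    have := (hasFDerivAt_iff_isLittleO_nhds_zero.1 hB).def hε
    filter_upwards [this] with h hh using hh
  have htr : Tendsto (fun h : E => x₀ + h) (𝓝 0) (𝓝 x₀) := by
    simpa using (continuous_add_left x₀).tendsto (0 : E)
  have hd' : ∀ᶠ h in 𝓝 (0:E), HasFDerivAt F (f' (x₀ + h)) (x₀ + h) := htr.eventually hd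
  obtain ⟨r, hr, hball⟩ := Metric.eventually_nhds_iff_ball.1 (h1.and hd')
  have key : ∀ h : E, ‖h‖ < r →
      ‖F (x₀ + h) - F x₀ - f' x₀ h - (2⁻¹ : ℝ) • B h h‖ ≤ ε * ‖h‖ ^ 2 := by
    intro h hhr
    set g : E → G := fun z => F (x₀ + z) - f' x₀ z - (2⁻¹ : ℝ) • B z z with hg_def
    set D : E → (E →L[ℝ] G) := fun z => f' (x₀ + z) - f' x₀ - B z with hD_def
    have hball' : ∀ z : E, ‖z‖ < r → (‖f' (x₀ + z) - f' x₀ - B z‖ ≤ ε * ‖z‖ ∧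
        HasFDerivAt F (f' (x₀ + z)) (x₀ + z)) := by
      intro z hz
      exact hball z (by simpa [Metric.mem_ball] using hz)
    have hg : ∀ z : E, ‖z‖ < r → HasFDerivAt g (D z) z := by
      intro z hz
      obtain ⟨_, hdz⟩ := hball' z hz
      have t1 : HasFDerivAt (fun z : E => F (x₀ + z)) (f' (x₀ + z)) z := by
        have := hdz.comp z ((hasFDerivAt_id z).const_add x₀)
        simpa [Function.comp_def] using this
      have t2 : HasFDerivAt (fun z : E => f' x₀ z) (f' x₀) z := (f' x₀).hasFDerivAt
      have hbil : IsBoundedBilinearMap ℝ (fun p : E × E => B p.1 p.2) := B.isBoundedBilinearMap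
      have hdiag : HasFDerivAt (fun z : E => (z, z))
          (((ContinuousLinearMap.id ℝ E).prod (ContinuousLinearMap.id ℝ E))) z :=
        HasFDerivAt.prodMk (hasFDerivAt_id z) (hasFDerivAt_id z)
      have t3 : HasFDerivAt (fun z : E => B z z)
          ((hbil.deriv (z, z)).comp
            ((ContinuousLinearMap.id ℝ E).prod (ContinuousLinearMap.id ℝ E))) z := by
        have := HasFDerivAt.comp (f := fun z : E => (z, z)) z (hbil.hasFDerivAt (z, z)) hdiag
        simpa [Function.comp_def] using this
      have t3' : HasFDerivAt (fun z : E => (2⁻¹ : ℝ) • B z z) (B z) z := by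
        have h4 := t3.const_smul (2⁻¹ : ℝ)
        convert h4 using 1
        · rfl
        ext k
        have := hsymm k z
        simp only [ContinuousLinearMap.smul_apply, ContinuousLinearMap.coe_comp',
          Function.comp_apply, ContinuousLinearMap.prod_apply, ContinuousLinearMap.coe_id',
          id_eq, IsBoundedBilinearMap.deriv_apply]
        rw [this, ← two_smul ℝ (B z k), smul_smul]
        norm_num
      exact (t1.sub t2).sub t3'
    have hseg : segment ℝ (0:E) h ⊆ {z | ‖z‖ < r} := by
      intro z hz
      rw [segment_eq_image] at hz
      obtain ⟨t, ht, rfl⟩ := hz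
      simp only [smul_zero, zero_add]
      calc ‖t • h‖ = |t| * ‖h‖ := by rw [norm_smul, Real.norm_eq_abs]
        _ ≤ 1 * ‖h‖ := by
            apply mul_le_mul_of_nonneg_right _ (norm_nonneg h)
            rw [abs_le]; constructor <;> linarith [ht.1, ht.2]
        _ < r := by simpa using hhr
    have hbound : ∀ z ∈ segment ℝ (0:E) h, ‖D z‖ ≤ ε * ‖h‖ := by
      intro z hz
      have hzr : ‖z‖ < r := hseg hz
      have hzh : ‖z‖ ≤ ‖h‖ := by
        rw [segment_eq_image] at hz
        obtain ⟨t, ht, rfl⟩ := hz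
        simp only [smul_zero, zero_add]
        calc ‖t • h‖ = |t| * ‖h‖ := by rw [norm_smul, Real.norm_eq_abs]
          _ ≤ 1 * ‖h‖ := by
              apply mul_le_mul_of_nonneg_right _ (norm_nonneg h)
              rw [abs_le]; constructor <;> linarith [ht.1, ht.2]
          _ = ‖h‖ := one_mul _
      exact le_trans (hball' z hzr).1 (mul_le_mul_of_nonneg_left hzh hε.le)
    have := (convex_segment (0:E) h).norm_image_sub_le_of_norm_hasFDerivWithin_le
      (fun z hz => (hg z (hseg hz)).hasFDerivWithinAt) hbound
      (left_mem_segment ℝ (0:E) h) (right_mem_segment ℝ (0:E) h)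
    have hg0 : g 0 = F x₀ := by simp [hg_def]
    have heq : F (x₀ + h) - F x₀ - f' x₀ h - (2⁻¹ : ℝ) • B h h = g h - g 0 := by
      rw [hg0]; simp only [hg_def]; abel
    rw [heq]
    calc ‖g h - g 0‖ ≤ ε * ‖h‖ * ‖h - 0‖ := this
      _ = ε * ‖h‖ ^ 2 := by rw [sub_zero]; ring
  filter_upwards [Metric.ball_mem_nhds (0:E) hr] with h hh
  rw [Metric.mem_ball, dist_zero_right] at hh
  calc ‖F (x₀ + h) - F x₀ - f' x₀ h - (2⁻¹ : ℝ) • B h h‖ ≤ ε * ‖h‖ ^ 2 := key h hh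
    _ = ε * ‖(‖h‖ ^ 2)‖ := by rw [Real.norm_eq_abs, abs_of_nonneg (by positivity)]

lemma clm_decomp (T : ℝ × ℝ →L[ℝ] ℝ) (p q : ℝ) :
    T (p, q) = p * T (1, 0) + q * T (0, 1) := by
  have h : ((p, q) : ℝ × ℝ) = p • ((1:ℝ), (0:ℝ)) + q • ((0:ℝ), (1:ℝ)) := by
    simp [Prod.ext_iff]
  rw [h, map_add, map_smul, map_smul, smul_eq_mul, smul_eq_mul]

lemma clm2_decomp (B : ℝ × ℝ →L[ℝ] (ℝ × ℝ →L[ℝ] ℝ)) (P Q : ℝ) :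
    B (P, Q) (P, Q) = B (1, 0) (1, 0) * P ^ 2
      + (B (1, 0) (0, 1) + B (0, 1) (1, 0)) * (P * Q) + B (0, 1) (0, 1) * Q ^ 2 := by
  have h1 : B (P, Q) = P • B (1, 0) + Q • B (0, 1) := by
    have h : ((P, Q) : ℝ × ℝ) = P • ((1:ℝ), (0:ℝ)) + Q • ((0:ℝ), (1:ℝ)) := by
      simp [Prod.ext_iff]
    rw [h, map_add, map_smul, map_smul]
  rw [h1, clm_decomp (P • B (1, 0) + Q • B (0, 1)) P Q]
  simp only [ContinuousLinearMap.add_apply, ContinuousLinearMap.smul_apply,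
    ContinuousLinearMap.coe_smul', Pi.smul_apply, smul_eq_mul]
  ring

set_option maxHeartbeats 1600000 in
lemma fold_aux (l : Filter ℝ) (p q N Gf ρ₁ ρ₂ : ℝ → ℝ) (a b c d α β γ : ℝ)
    (ha0 : a ≠ 0) (hb0 : b ≠ 0) (hα : α = a)
    (hNnonneg : ∀ δ, 0 ≤ N δ)
    (hNmax : ∀ δ, N δ = max |p δ| |q δ|)
    (hN0 : Tendsto N l (𝓝 0))
    (hδpos : ∀ᶠ δ in l, 0 < δ)
    (htendδ : Tendsto (fun δ : ℝ => δ) l (𝓝 0))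
    (EQ2 : ∀ᶠ δ in l, b * q δ +
      2⁻¹ * (α * p δ ^ 2 + β * (p δ * q δ) + γ * q δ ^ 2) + ρ₂ δ = 0)
    (hρ₂ : ρ₂ =o[l] fun δ => N δ ^ 2)
    (hGe : ∀ δ, Gf δ = a * p δ + d * q δ + ρ₁ δ)
    (hρ₁ : ρ₁ =o[l] fun δ => N δ)
    (hGc : Tendsto (fun δ => Gf δ / δ) l (𝓝 c)) :
    Tendsto (fun δ => p δ / δ) l (𝓝 (c / a)) ∧
    Tendsto (fun δ => q δ / δ ^ 2) l (𝓝 (-c ^ 2 / (2 * a * b))) := by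
  have hb' : (0:ℝ) < |b| := abs_pos.2 hb0
  have ha' : (0:ℝ) < |a| := abs_pos.2 ha0
  have habs_p : ∀ δ, |p δ| ≤ N δ := fun δ => by rw [hNmax]; exact le_max_left _ _
  have habs_q : ∀ δ, |q δ| ≤ N δ := fun δ => by rw [hNmax]; exact le_max_right _ _
  set Q : ℝ → ℝ := fun δ => α * p δ ^ 2 + β * (p δ * q δ) + γ * q δ ^ 2 with hQdef
  have hQbound : ∀ δ, |Q δ| ≤ (|α| + |β| + |γ|) * N δ ^ 2 := by
    intro δ
    have h1 : |α * p δ ^ 2| ≤ |α| * N δ ^ 2 := by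
      rw [abs_mul, abs_pow]
      exact mul_le_mul_of_nonneg_left (pow_le_pow_left₀ (abs_nonneg _) (habs_p δ) 2) (abs_nonneg α)
    have h2 : |β * (p δ * q δ)| ≤ |β| * N δ ^ 2 := by
      rw [abs_mul, abs_mul]
      have : |p δ| * |q δ| ≤ N δ * N δ :=
        mul_le_mul (habs_p δ) (habs_q δ) (abs_nonneg _) (hNnonneg δ)
      nlinarith [abs_nonneg β]
    have h3 : |γ * q δ ^ 2| ≤ |γ| * N δ ^ 2 := by
      rw [abs_mul, abs_pow]
      exact mul_le_mul_of_nonneg_left (pow_le_pow_left₀ (abs_nonneg _) (habs_q δ) 2) (abs_nonneg γ)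
    calc |Q δ| ≤ |α * p δ ^ 2| + |β * (p δ * q δ)| + |γ * q δ ^ 2| := by
          rw [hQdef]; exact (abs_add_le _ _).trans (by linarith [abs_add_le (α * p δ ^ 2) (β * (p δ * q δ))])
      _ ≤ (|α| + |β| + |γ|) * N δ ^ 2 := by nlinarith
  set K : ℝ := ((|α| + |β| + |γ|) / 2 + 1) / |b| with hKdef
  have hK0 : 0 ≤ K := by positivity
  have hq_le : ∀ᶠ δ in l, |q δ| ≤ K * N δ ^ 2 := by
    filter_upwards [EQ2, hρ₂.def one_pos] with δ h2 hr
    have hr' : |ρ₂ δ| ≤ N δ ^ 2 := by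
      have h4 : ‖ρ₂ δ‖ ≤ 1 * ‖N δ ^ 2‖ := hr
      rw [Real.norm_eq_abs, Real.norm_eq_abs, one_mul,
        abs_of_nonneg (by positivity : (0:ℝ) ≤ N δ ^ 2)] at h4
      exact h4
    have hbq : |b| * |q δ| ≤ ((|α| + |β| + |γ|) / 2 + 1) * N δ ^ 2 := by
      rw [← abs_mul]
      have he : b * q δ = -(2⁻¹ * Q δ + ρ₂ δ) := by rw [hQdef]; linarith
      rw [he, abs_neg]
      have h5 := abs_add_le (2⁻¹ * Q δ) (ρ₂ δ)
      have h6 : |2⁻¹ * Q δ| = 2⁻¹ * |Q δ| := by rw [abs_mul]; norm_num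
      linarith [hQbound δ]
    calc |q δ| = |b| * |q δ| / |b| := by field_simp
      _ ≤ (((|α| + |β| + |γ|) / 2 + 1) * N δ ^ 2) / |b| := by gcongr
      _ = K * N δ ^ 2 := by rw [hKdef]; ring
  have hNlt : ∀ᶠ δ in l, N δ < 1 / (2 * (K + 1)) :=
    hN0.eventually_lt_const (one_div_pos.mpr (by linarith))
  have hNp : ∀ᶠ δ in l, N δ = |p δ| ∧ |q δ| ≤ K * p δ ^ 2 := by
    filter_upwards [hq_le, hNlt] with δ hq' hN
    have hq2 : |q δ| ≤ N δ / 2 := by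
      have h5 : K * N δ ≤ 1 / 2 := by
        have h6 : K * N δ ≤ K * (1 / (2 * (K + 1))) :=
          mul_le_mul_of_nonneg_left hN.le hK0
        have h7 : K * (1 / (2 * (K + 1))) ≤ 1 / 2 := by
          rw [mul_one_div, div_le_div_iff₀ (by linarith) (by norm_num)]
          nlinarith
        linarith
      nlinarith [hNnonneg δ]
    have hNeq : N δ = |p δ| := by
      rcases max_choice |p δ| |q δ| with hc' | hc'
      · rw [hNmax, hc']
      · have h8 : N δ = |q δ| := by rw [hNmax, hc']
        have h9 : N δ = 0 := by
          have := h8.le.trans hq2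
          linarith [hNnonneg δ]
        have h10 : |p δ| = 0 := le_antisymm (h9 ▸ habs_p δ) (abs_nonneg _)
        rw [h9, h10]
    refine ⟨hNeq, ?_⟩
    calc |q δ| ≤ K * N δ ^ 2 := hq'
      _ = K * p δ ^ 2 := by rw [hNeq, sq_abs]
  set M : ℝ := 2 * (|c| + 1) / |a| with hMdef
  have hM0 : 0 ≤ M := by positivity
  have hG_lower : ∀ᶠ δ in l, |a| / 2 * |p δ| ≤ |Gf δ| := by
    have hdK : (0:ℝ) ≤ |d| * K := mul_nonneg (abs_nonneg d) hK0
    have hsm : ∀ᶠ δ in l, N δ < |a| / (4 * (|d| * K + 1)) :=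
      hN0.eventually_lt_const (div_pos ha' (by linarith))
    filter_upwards [hNp, hρ₁.def (show (0:ℝ) < |a| / 4 by positivity), hsm] with δ hNp' hr hsmall
    obtain ⟨hNeq, hqp⟩ := hNp'
    have hr' : |ρ₁ δ| ≤ |a| / 4 * |p δ| := by
      have h4 : ‖ρ₁ δ‖ ≤ |a| / 4 * ‖N δ‖ := hr
      rw [Real.norm_eq_abs, Real.norm_eq_abs, abs_of_nonneg (hNnonneg δ), hNeq] at h4
      exact h4
    have hdq : |d * q δ| ≤ |a| / 4 * |p δ| := by
      have h5 : |d * q δ| ≤ |d| * (K * p δ ^ 2) := by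
        rw [abs_mul]; exact mul_le_mul_of_nonneg_left hqp (abs_nonneg d)
      have h6 : |d| * K * |p δ| ≤ |a| / 4 := by
        have h7 : |d| * K * |p δ| ≤ (|d| * K + 1) * N δ := by
          rw [hNeq]
          nlinarith [abs_nonneg (p δ)]
        have h9 : (0:ℝ) < |d| * K + 1 := by linarith
        have h9' := mul_le_mul_of_nonneg_left hsmall.le h9.le
        have h8 : (|d| * K + 1) * (|a| / (4 * (|d| * K + 1))) = |a| / 4 := by
          field_simp
        linarith [h8, h9']
      nlinarith [sq_abs (p δ), abs_nonneg (p δ)]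
    have h7 : |a| * |p δ| ≤ |Gf δ| + (|d * q δ| + |ρ₁ δ|) := by
      rw [← abs_mul]
      have he : a * p δ = Gf δ + (-(d * q δ + ρ₁ δ)) := by rw [hGe δ]; ring
      rw [he]
      refine (abs_add_le _ _).trans ?_
      rw [abs_neg]
      have := abs_add_le (d * q δ) (ρ₁ δ)
      linarith
    linarith
  have hGbd : ∀ᶠ δ in l, |Gf δ / δ| ≤ |c| + 1 := by
    filter_upwards [hGc.abs.eventually_lt_const (lt_add_one |c|)] with δ hδ using hδ.le
  have hpM : ∀ᶠ δ in l, |p δ| ≤ M * δ := by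
    filter_upwards [hG_lower, hGbd, hδpos] with δ h1' h2' h3'
    have h4 : |Gf δ| ≤ (|c| + 1) * δ := by
      rw [abs_div, abs_of_pos h3'] at h2'
      exact (div_le_iff₀ h3').1 h2'
    rw [hMdef, div_mul_eq_mul_div, le_div_iff₀ ha']
    nlinarith
  have hq_div : Tendsto (fun δ => q δ / δ) l (𝓝 0) := by
    have hlim : Tendsto (fun δ => K * M ^ 2 * δ) l (𝓝 0) := by
      simpa using htendδ.const_mul (K * M ^ 2)
    apply squeeze_zero_norm' _ hlim
    filter_upwards [hNp, hpM, hδpos] with δ hNp' hpm hδ'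
    obtain ⟨hNeq, hqp⟩ := hNp'
    rw [Real.norm_eq_abs, abs_div, abs_of_pos hδ', div_le_iff₀ hδ']
    have h5 : |p δ| * |p δ| ≤ (M * δ) * (M * δ) :=
      mul_le_mul hpm hpm (abs_nonneg _) (mul_nonneg hM0 hδ'.le)
    nlinarith [sq_abs (p δ)]
  have hNO : N =O[l] fun δ => δ := by
    rw [isBigO_iff]
    refine ⟨M, ?_⟩
    filter_upwards [hNp, hpM, hδpos] with δ hNp' hpm hδ'
    rw [Real.norm_eq_abs, Real.norm_eq_abs, abs_of_nonneg (hNnonneg δ), abs_of_pos hδ', hNp'.1]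
    exact hpm
  have hρ₁δ : Tendsto (fun δ => ρ₁ δ / δ) l (𝓝 0) :=
    (hρ₁.trans_isBigO hNO).tendsto_div_nhds_zero
  have hp_div : Tendsto (fun δ => p δ / δ) l (𝓝 (c / a)) := by
    have hlim : Tendsto (fun δ => (Gf δ / δ - d * (q δ / δ) - ρ₁ δ / δ) / a) l
        (𝓝 ((c - d * 0 - 0) / a)) := ((hGc.sub (hq_div.const_mul d)).sub hρ₁δ).div_const a
    rw [show (c - d * 0 - 0) / a = c / a by ring] at hlim
    have heq : ∀ᶠ δ in l,
        (Gf δ / δ - d * (q δ / δ) - ρ₁ δ / δ) / a = p δ / δ := by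
      filter_upwards [hδpos] with δ hδ'
      rw [hGe δ]
      field_simp
      ring
    exact Tendsto.congr' heq hlim
  refine ⟨hp_div, ?_⟩
  have hN2O : (fun δ => N δ ^ 2) =O[l] fun δ => δ ^ 2 := hNO.pow 2
  have hρ₂δ : Tendsto (fun δ => ρ₂ δ / δ ^ 2) l (𝓝 0) :=
    (hρ₂.trans_isBigO hN2O).tendsto_div_nhds_zero
  have hQlim : Tendsto (fun δ => α * (p δ / δ) ^ 2 + β * ((p δ / δ) * (q δ / δ)) +
      γ * (q δ / δ) ^ 2) l (𝓝 (α * (c / a) ^ 2 + β * ((c / a) * 0) + γ * 0 ^ 2)) :=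
    (((hp_div.pow 2).const_mul α).add ((hp_div.mul hq_div).const_mul β)).add
      ((hq_div.pow 2).const_mul γ)
  have hlim : Tendsto (fun δ => -(2⁻¹ * (α * (p δ / δ) ^ 2 + β * ((p δ / δ) * (q δ / δ)) +
      γ * (q δ / δ) ^ 2) + ρ₂ δ / δ ^ 2) / b) l
      (𝓝 (-(2⁻¹ * (α * (c / a) ^ 2 + β * ((c / a) * 0) + γ * 0 ^ 2) + 0) / b)) :=
    (((hQlim.const_mul 2⁻¹).add hρ₂δ).neg).div_const b
  rw [show -(2⁻¹ * (α * (c / a) ^ 2 + β * ((c / a) * 0) + γ * 0 ^ 2) + 0) / b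
      = -c ^ 2 / (2 * a * b) by rw [hα]; field_simp; ring] at hlim
  apply Tendsto.congr' _ hlim
  filter_upwards [EQ2, hδpos] with δ h2 hδ'
  have hδ0 : (δ:ℝ) ≠ 0 := ne_of_gt hδ'
  have h2' : b * q δ + 2⁻¹ * Q δ + ρ₂ δ = 0 := by rw [hQdef]; exact h2
  have hqe : q δ = -(2⁻¹ * Q δ + ρ₂ δ) / b := by
    rw [eq_div_iff hb0]
    linear_combination h2'
  have key : α * (p δ / δ) ^ 2 + β * (p δ / δ * (q δ / δ)) + γ * (q δ / δ) ^ 2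
      = Q δ / δ ^ 2 := by
    rw [hQdef]
    field_simp
  rw [key, hqe]
  field_simp

end AuxiliaryLemmas

set_option maxHeartbeats 1600000

/-- leading-order asymptotics of the Turing point near a fold:
if F is C² near (u*,μ*) with F = F_u = 0, a = F_uu ≠ 0 and b = F_μ ≠ 0 there,
and (u(δ),μ(δ)) → (u*,μ*) satisfies F(u(δ),μ(δ)) = 0 with
F_u(u(δ),μ(δ))/δ → c, then (u(δ) − u*)/δ → c/a and (μ(δ) − μ*)/δ² → −c²/(2ab)
as δ → 0⁺. -/
theorem turing_point_fold_asymptotics (F : ℝ × ℝ → ℝ) (ustar mustar : ℝ)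
    (hF : ContDiffAt ℝ 2 F (ustar, mustar))
    (h0 : F (ustar, mustar) = 0)
    (h1 : deriv (fun x => F (x, mustar)) ustar = 0)
    (a b c : ℝ)
    (ha : deriv (fun x => deriv (fun y => F (y, mustar)) x) ustar = a)
    (ha0 : a ≠ 0)
    (hb : deriv (fun m => F (ustar, m)) mustar = b)
    (hb0 : b ≠ 0)
    (ε₀ : ℝ) (hε₀ : 0 < ε₀) (u μ : ℝ → ℝ)
    (hu : Tendsto u (𝓝[>] 0) (𝓝 ustar))
    (hμ : Tendsto μ (𝓝[>] 0) (𝓝 mustar))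
    (hzero : ∀ δ : ℝ, 0 < δ → δ < ε₀ → F (u δ, μ δ) = 0)
    (hc : Tendsto (fun δ => deriv (fun x => F (x, μ δ)) (u δ) / δ) (𝓝[>] 0) (𝓝 c)) :
    Tendsto (fun δ => (u δ - ustar) / δ) (𝓝[>] 0) (𝓝 (c / a)) ∧
    Tendsto (fun δ => (μ δ - mustar) / δ ^ 2) (𝓝[>] 0) (𝓝 (-c ^ 2 / (2 * a * b))) := by
  open Asymptotics in
  set f' : ℝ × ℝ → (ℝ × ℝ →L[ℝ] ℝ) := fderiv ℝ F with hf'def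
  have hF1 : ContDiffAt ℝ 1 f' (ustar, mustar) := hF.fderiv_right (by norm_num)
  set B := fderiv ℝ f' (ustar, mustar) with hBdef
  have hB : HasFDerivAt f' B (ustar, mustar) := (hF1.differentiableAt one_ne_zero).hasFDerivAt
  have hd : ∀ᶠ y in 𝓝 (ustar, mustar), HasFDerivAt F (f' y) y := by
    filter_upwards [hF.eventually (by norm_num)] with y hy
    exact (hy.differentiableAt two_ne_zero).hasFDerivAt
  have sect_u : ∀ y : ℝ × ℝ, HasFDerivAt F (f' y) y →
      HasDerivAt (fun x => F (x, y.2)) (f' y (1, 0)) y.1 := by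
    intro y hy
    have hline : HasDerivAt (fun x : ℝ => (x, y.2)) ((1:ℝ), (0:ℝ)) y.1 :=
      HasDerivAt.prodMk (hasDerivAt_id y.1) (hasDerivAt_const y.1 y.2)
    exact hy.comp_hasDerivAt y.1 hline
  have sect_m : ∀ y : ℝ × ℝ, HasFDerivAt F (f' y) y →
      HasDerivAt (fun m => F (y.1, m)) (f' y (0, 1)) y.2 := by
    intro y hy
    have hline : HasDerivAt (fun m : ℝ => (y.1, m)) ((0:ℝ), (1:ℝ)) y.2 :=
      HasDerivAt.prodMk (hasDerivAt_const y.2 y.1) (hasDerivAt_id y.2)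
    exact hy.comp_hasDerivAt y.2 hline
  have hdx₀ : HasFDerivAt F (f' (ustar, mustar)) (ustar, mustar) := hd.self_of_nhds
  have hA1 : f' (ustar, mustar) (1, 0) = 0 := ((sect_u _ hdx₀).deriv).symm.trans h1
  have hA2 : f' (ustar, mustar) (0, 1) = b := ((sect_m _ hdx₀).deriv).symm.trans hb
  set G : ℝ × ℝ → ℝ := fun y => f' y (1, 0) with hGdef
  set ev : ((ℝ × ℝ) →L[ℝ] ℝ) →L[ℝ] ℝ := ContinuousLinearMap.apply ℝ ℝ ((1:ℝ), (0:ℝ))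
    with hevdef
  have hG : HasFDerivAt G (ev.comp B) (ustar, mustar) := by
    have := (ev.hasFDerivAt (x := f' (ustar, mustar))).comp (ustar, mustar) hB
    exact this
  have hBaa : (ev.comp B) (1, 0) = a := by
    have htend : Tendsto (fun x : ℝ => (x, mustar)) (𝓝 ustar) (𝓝 (ustar, mustar)) :=
      (continuous_id.prodMk continuous_const).tendsto ustar
    have heq : (fun x => deriv (fun y => F (y, mustar)) x) =ᶠ[𝓝 ustar]
        fun x => G (x, mustar) := by
      filter_upwards [htend.eventually hd] with x hx
      exact (sect_u (x, mustar) hx).deriv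
    have hline : HasDerivAt (fun x : ℝ => (x, mustar)) ((1:ℝ), (0:ℝ)) ustar :=
      HasDerivAt.prodMk (hasDerivAt_id ustar) (hasDerivAt_const ustar mustar)
    have hGd : HasDerivAt (fun x => G (x, mustar)) ((ev.comp B) (1, 0)) ustar :=
      by have := hG.comp_hasDerivAt ustar hline; exact this
    have h5 : deriv (fun x => deriv (fun y => F (y, mustar)) x) ustar = (ev.comp B) (1, 0) := by
      rw [heq.deriv_eq]; exact hGd.deriv
    exact h5.symm.trans ha
  have hBaa' : B (1, 0) (1, 0) = a := hBaa
  clear_value f' B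
  -- path quantities
  set l := 𝓝[>] (0:ℝ) with hldef
  set p : ℝ → ℝ := fun δ => u δ - ustar with hpdef
  set q : ℝ → ℝ := fun δ => μ δ - mustar with hqdef
  set h : ℝ → ℝ × ℝ := fun δ => (p δ, q δ) with hhdef
  set N : ℝ → ℝ := fun δ => ‖h δ‖ with hNdef
  clear_value p q
  have hhPQ : ∀ δ, h δ = (p δ, q δ) := fun δ => by rw [hhdef]
  have hδpos : ∀ᶠ δ in l, (0:ℝ) < δ := self_mem_nhdsWithin
  have htendδ : Tendsto (fun δ : ℝ => δ) l (𝓝 0) := tendsto_id.mono_left nhdsWithin_le_nhds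
  have hh0 : Tendsto h l (𝓝 0) := by
    have h1' : Tendsto p l (𝓝 0) := by
      have := hu.sub_const ustar
      simpa [hpdef] using this
    have h2' : Tendsto q l (𝓝 0) := by
      have := hμ.sub_const mustar
      simpa [hqdef] using this
    exact h1'.prodMk_nhds h2'
  have hN0 : Tendsto N l (𝓝 0) := by
    have := hh0.norm
    simpa [hNdef] using this
  have hNmax : ∀ δ, N δ = max |p δ| |q δ| := by
    intro δ
    simp [hNdef, hhdef, Prod.norm_def, Real.norm_eq_abs]
  have hNnonneg : ∀ δ, 0 ≤ N δ := fun δ => by rw [hNdef]; exact norm_nonneg _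
  have hxh : ∀ δ, ((ustar, mustar) : ℝ × ℝ) + h δ = (u δ, μ δ) := by
    intro δ
    simp only [hhdef, hpdef, hqdef, Prod.mk_add_mk, Prod.ext_iff]
    constructor <;> ring
  set ρ₂ : ℝ → ℝ := fun δ => F (u δ, μ δ) - b * q δ - 2⁻¹ * B (h δ) (h δ) with hρ₂def
  have hρ₂ : ρ₂ =o[l] fun δ => N δ ^ 2 := by
    have hq2 := (quad_taylor hd hB).comp_tendsto hh0
    apply hq2.congr' _ (Eventually.of_forall fun δ => by simp [Function.comp, hNdef])
    apply Eventually.of_forall; intro δ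
    simp only [Function.comp]
    rw [hxh δ, h0, smul_eq_mul]
    have he : f' (ustar, mustar) (h δ) = b * q δ := by
      rw [hhPQ δ, clm_decomp, hA1, hA2]; ring
    rw [he]
    simp only [hρ₂def]
    ring
  have hIoo : ∀ᶠ δ in l, F (u δ, μ δ) = 0 := by
    filter_upwards [Ioo_mem_nhdsGT_of_mem (Set.mem_Ico.2 ⟨le_refl (0:ℝ), hε₀⟩)] with δ hδ
    exact hzero δ hδ.1 hδ.2
  set α : ℝ := B (1, 0) (1, 0) with hαdef
  set β : ℝ := B (1, 0) (0, 1) + B (0, 1) (1, 0) with hβdef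
  set γ : ℝ := B (0, 1) (0, 1) with hγdef
  set d : ℝ := B (0, 1) (1, 0) with hddef
  have hα : α = a := hαdef.symm ▸ hBaa'
  have EQ2 : ∀ᶠ δ in l, b * q δ +
      2⁻¹ * (α * p δ ^ 2 + β * (p δ * q δ) + γ * q δ ^ 2) + ρ₂ δ = 0 := by
    filter_upwards [hIoo] with δ hδ
    have hBQ : B (h δ) (h δ) = α * p δ ^ 2 + β * (p δ * q δ) + γ * q δ ^ 2 := by
      rw [hhPQ δ, clm2_decomp, hαdef, hβdef, hγdef]
    simp only [hρ₂def]
    rw [hδ, hBQ]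
    ring
  clear_value α β γ d
  set ρ₁ : ℝ → ℝ := fun δ => G (u δ, μ δ) - (a * p δ + d * q δ) with hρ₁def
  have hρ₁ : ρ₁ =o[l] fun δ => N δ := by
    have hGlit := ((hasFDerivAt_iff_isLittleO_nhds_zero.1 hG).comp_tendsto hh0).norm_right
    apply hGlit.congr' _ (Eventually.of_forall fun δ => by simp [Function.comp, hNdef])
    apply Eventually.of_forall; intro δ
    simp only [Function.comp]
    rw [hxh δ]
    have he : (ev.comp B) (h δ) = a * p δ + d * q δ := by
      rw [hhPQ δ, clm_decomp (ev.comp B), hBaa]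
      have h2 : (ev.comp B) ((0:ℝ), (1:ℝ)) = d := by rw [hddef]; rfl
      rw [h2]; ring
    have hg0 : G (ustar, mustar) = 0 := hA1
    rw [hg0, he]
    simp only [hρ₁def]
    ring
  have hGe : ∀ δ, G (u δ, μ δ) = a * p δ + d * q δ + ρ₁ δ := by
    intro δ
    simp only [hρ₁def]
    ring
  have hGc : Tendsto (fun δ => G (u δ, μ δ) / δ) l (𝓝 c) := by
    have htend : Tendsto (fun δ => (u δ, μ δ)) l (𝓝 (ustar, mustar)) := hu.prodMk_nhds hμ
    have heq : ∀ᶠ δ in l, deriv (fun x => F (x, μ δ)) (u δ) / δ = G (u δ, μ δ) / δ := by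
      filter_upwards [htend.eventually hd] with δ hδ
      rw [(sect_u (u δ, μ δ) hδ).deriv]
    exact Tendsto.congr' heq hc
  clear_value ρ₁ ρ₂
  obtain ⟨hp_div, hq_div⟩ := fold_aux l p q N (fun δ => G (u δ, μ δ)) ρ₁ ρ₂ a b c d α β γ
    ha0 hb0 hα hNnonneg hNmax hN0 hδpos htendδ EQ2 hρ₂ hGe hρ₁ hGc
  constructor
  · refine hp_div.congr fun δ => ?_
    rw [hpdef]
  · refine hq_div.congr fun δ => ?_
    rw [hqdef]
end
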